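/- For 2 < k ≤ n, 1 ≤ m ≤ k, every permutation β ∈ S_{n+1}(T_k^m) satisfies β(1) ≤ m-1 or β(1) ≥ n+m-k+2. -/
import Mathlib


/-- An occurrence of the pattern `τ` in `α` at the strictly increasing
index sequence `f`: the subsequence `α ∘ f` is order-isomorphic to `τ`. -/
def PattOccursAt {k n : ℕ} (τ : Equiv.Perm (Fin k)) (α : Equiv.Perm (Fin n))
    (f : Fin k → Fin n) : Prop :=
  StrictMono f ∧ ∀ i j : Fin k, τ i < τ j ↔ α (f i) < α (f j)

/-- `α` contains the pattern `τ`. -/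
def Contains {k n : ℕ} (τ : Equiv.Perm (Fin k)) (α : Equiv.Perm (Fin n)) : Prop :=
  ∃ f, PattOccursAt τ α f

/-- `α` avoids the pattern `τ`. -/
def Avoids {k n : ℕ} (τ : Equiv.Perm (Fin k)) (α : Equiv.Perm (Fin n)) : Prop :=
  ¬ Contains τ α

/-- `α` contains the pattern `τ` exactly once. -/
def ContainsExactlyOnce {k n : ℕ} (τ : Equiv.Perm (Fin k)) (α : Equiv.Perm (Fin n)) : Prop :=
  ∃! f, PattOccursAt τ α f

/-- `T_k^m`: the permutations `σ` of length `k` with first entry `σ(1) = m`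
(one-based; in `Fin k` terms, `(σ 0) + 1 = m`). -/
def Tkm (k m : ℕ) : Set (Equiv.Perm (Fin k)) :=
  {σ | ∀ i : Fin k, (i : ℕ) = 0 → (σ i : ℕ) + 1 = m}

open Finset

private lemma filter_lt_card {N : ℕ} (ρ : Equiv.Perm (Fin N)) (c : Fin N) :
    ((univ : Finset (Fin N)).filter fun x => ρ x < c).card = (c : ℕ) := by
  have himg : ((univ : Finset (Fin N)).filter fun x => ρ x < c)
      = Finset.image ρ.symm (Finset.Iio c) := by
    ext x
    simp only [mem_filter, mem_univ, true_and, mem_image, mem_Iio]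
    constructor
    · intro h; exact ⟨ρ x, h, by simp⟩
    · rintro ⟨y, hy, rfl⟩; simpa using hy
  rw [himg, Finset.card_image_of_injective _ ρ.symm.injective, Fin.card_Iio]

private lemma filter_gt_card {n : ℕ} (ρ : Equiv.Perm (Fin (n+1))) (c : Fin (n+1)) :
    ((univ : Finset (Fin (n+1))).filter fun x => c < ρ x).card = n - (c : ℕ) := by
  have himg : ((univ : Finset (Fin (n+1))).filter fun x => c < ρ x)
      = Finset.image ρ.symm (Finset.Ioi c) := by
    ext x
    simp only [mem_filter, mem_univ, true_and, mem_image, mem_Ioi]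
    constructor
    · intro h; exact ⟨ρ x, h, by simp⟩
    · rintro ⟨y, hy, rfl⟩; simpa using hy
  rw [himg, Finset.card_image_of_injective _ ρ.symm.injective, Fin.card_Ioi]
  omega

theorem stmt17 (k m n : ℕ) (hk : 2 < k) (hkn : k ≤ n) (hm1 : 1 ≤ m) (hmk : m ≤ k)
    (β : Equiv.Perm (Fin (n + 1))) (hβ : ∀ τ ∈ Tkm k m, Avoids τ β) :
    (β ⟨0, by omega⟩ : ℕ) + 1 ≤ m - 1 ∨ n + m - k + 2 ≤ (β ⟨0, by omega⟩ : ℕ) + 1 := by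
  by_contra hcon
  push_neg at hcon
  obtain ⟨h1, h2⟩ := hcon
  set z : Fin (n+1) := ⟨0, by omega⟩ with hzdef
  have hA := filter_lt_card β (β z)
  have hB := filter_gt_card β (β z)
  have hb1 : m - 1 ≤ (β z : ℕ) := by omega
  have hb2 : (β z : ℕ) ≤ n + m - k := by omega
  obtain ⟨S₁, hS₁sub, hS₁card⟩ := Finset.exists_subset_card_eq
    (s := (univ : Finset (Fin (n+1))).filter fun x => β x < β z) (n := m - 1) (by omega)
  obtain ⟨S₂, hS₂sub, hS₂card⟩ := Finset.exists_subset_card_eq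
    (s := (univ : Finset (Fin (n+1))).filter fun x => β z < β x) (n := k - m) (by omega)
  have hS₁ : ∀ x ∈ S₁, β x < β z := fun x hx => (mem_filter.mp (hS₁sub hx)).2
  have hS₂ : ∀ x ∈ S₂, β z < β x := fun x hx => (mem_filter.mp (hS₂sub hx)).2
  have hdisj : Disjoint S₁ S₂ := by
    rw [Finset.disjoint_left]
    intro x hx1 hx2
    exact absurd (lt_trans (hS₁ x hx1) (hS₂ x hx2)) (lt_irrefl _)
  have hznot : z ∉ S₁ ∪ S₂ := by
    intro h
    rcases Finset.mem_union.mp h with h | h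
    · exact absurd (hS₁ z h) (lt_irrefl _)
    · exact absurd (hS₂ z h) (lt_irrefl _)
  set S : Finset (Fin (n+1)) := insert z (S₁ ∪ S₂) with hSdef
  have hScard : S.card = k := by
    rw [hSdef, Finset.card_insert_of_notMem hznot, Finset.card_union_of_disjoint hdisj,
      hS₁card, hS₂card]
    omega
  set g := S.orderEmbOfFin hScard with hgdef
  have hk0 : (0 : ℕ) < k := by omega
  have hzle : ∀ x : Fin (n+1), z ≤ x := fun x => by
    rw [hzdef, Fin.le_def]; exact Nat.zero_le _
  have hzero : g ⟨0, hk0⟩ = z := by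
    rw [hgdef, Finset.orderEmbOfFin_zero hScard hk0]
    exact le_antisymm (Finset.min'_le _ _ (Finset.mem_insert_self _ _))
      (Finset.le_min' _ _ _ (fun y _ => hzle y))
  -- the image finset
  set T : Finset (Fin (n+1)) := S.image β with hTdef
  have hTcard : T.card = k := by
    rw [hTdef, Finset.card_image_of_injective _ β.injective, hScard]
  set e := T.orderIsoOfFin hTcard with hedef
  have hmemT : ∀ i : Fin k, β (g i) ∈ T := fun i =>
    Finset.mem_image_of_mem β (Finset.orderEmbOfFin_mem S hScard i)
  set σfun : Fin k → Fin k := fun i => e.symm ⟨β (g i), hmemT i⟩ with hσfdef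
  have hinj : Function.Injective σfun := by
    intro i j hij
    have := e.symm.injective hij
    have hb : β (g i) = β (g j) := congrArg Subtype.val this
    exact g.injective (β.injective hb)
  set σ : Equiv.Perm (Fin k) := Equiv.ofBijective σfun
    (Finite.injective_iff_bijective.mp hinj) with hσdef
  have hσapp : ∀ i, σ i = σfun i := fun i => rfl
  have hσlt : ∀ i j : Fin k, σ i < σ j ↔ β (g i) < β (g j) := by
    intro i j
    rw [hσapp, hσapp, hσfdef]
    exact (OrderIso.lt_iff_lt e.symm).trans Subtype.mk_lt_mk
  have hocc : PattOccursAt σ β g :=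
    ⟨(S.orderEmbOfFin hScard).strictMono, hσlt⟩
  -- σ ∈ Tkm k m
  have hrank : ((σ ⟨0, hk0⟩ : Fin k) : ℕ) = m - 1 := by
    have h1' := filter_lt_card σ (σ ⟨0, hk0⟩)
    have hfeq : ((univ : Finset (Fin k)).filter fun j => σ j < σ ⟨0, hk0⟩)
        = (univ : Finset (Fin k)).filter fun j => β (g j) < β z := by
      apply Finset.filter_congr
      intro j _
      rw [hσlt j ⟨0, hk0⟩, hzero]
    have hcard2 : ((univ : Finset (Fin k)).filter fun j => β (g j) < β z).card = S₁.card := by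
      apply Finset.card_bij (fun j _ => g j)
      · intro j hj
        have hjS : g j ∈ S := Finset.orderEmbOfFin_mem S hScard j
        have hjlt : β (g j) < β z := (mem_filter.mp hj).2
        rw [hSdef] at hjS
        rcases Finset.mem_insert.mp hjS with h | h
        · rw [h] at hjlt; exact absurd hjlt (lt_irrefl _)
        · rcases Finset.mem_union.mp h with h | h
          · exact h
          · exact absurd (lt_trans hjlt (hS₂ _ h)) (lt_irrefl _)
      · intro i _ j _ hij
        exact g.injective hij
      · intro x hx
        have hxS : x ∈ S := by
          rw [hSdef]; exact Finset.mem_insert_of_mem (Finset.mem_union_left _ hx)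
        have : x ∈ Set.range g := by
          rw [hgdef, Finset.range_orderEmbOfFin]; exact hxS
        obtain ⟨j, hj⟩ := this
        refine ⟨j, ?_, hj⟩
        rw [mem_filter]
        exact ⟨mem_univ _, by rw [hj]; exact hS₁ x hx⟩
    rw [← h1', hfeq, hcard2, hS₁card]
  have hσTkm : σ ∈ Tkm k m := by
    intro i hi
    have : i = ⟨0, hk0⟩ := Fin.ext hi
    rw [this, hrank]
    omega
  exact hβ σ hσTkm ⟨g, hocc⟩
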